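/- If A is a commutative ring equipped with p-derivations δ_{p_1}, δ_{p_2} for distinct primes p_1, p_2 such that the commutation identity δ_{p_1}δ_{p_2}a - δ_{p_2}δ_{p_1}a = C_{p_1,p_2}(a, δ_{p_1}a, δ_{p_2}a) holds for all a, and the primes are non-zero divisors in A, then the associated Frobenius lifts commute: φ_{p_1}φ_{p_2}(a) = φ_{p_2}φ_{p_1}(a) for all a ∈ A. -/
import Mathlib


open MvPolynomial

/-- If `A` carries `p₁`- and `p₂`-derivations (for distinct primes `p₁, p₂`,
non-zero divisors in `A`) satisfying the commutation identity
`δ₁δ₂a - δ₂δ₁a = C_{p₁,p₂}(a, δ₁a, δ₂a)` (written multiplied through by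
`p₁p₂`), then the associated Frobenius lifts `φ_k(a) = a^{p_k} + p_k δ_k a`
commute. Here `C_p ∈ ℤ[X,Y]` satisfies `p·C_p = X^p + Y^p - (X+Y)^p`, and
`d₁₂ = δ_{p₁}(p₂) = (p₂ - p₂^{p₁})/p₁`, `d₂₁ = δ_{p₂}(p₁) = (p₁ - p₁^{p₂})/p₂`
are the Fermat quotients on `ℤ`. -/
theorem stmt_4 {A : Type*} [CommRing A]
    (p₁ p₂ : ℕ) (hp₁ : p₁.Prime) (hp₂ : p₂.Prime) (hne : p₁ ≠ p₂)
    (Cp₁ Cp₂ : MvPolynomial (Fin 2) ℤ)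
    (hCp₁ : (p₁ : MvPolynomial (Fin 2) ℤ) * Cp₁ =
      (X 0) ^ p₁ + (X 1) ^ p₁ - (X 0 + X 1) ^ p₁)
    (hCp₂ : (p₂ : MvPolynomial (Fin 2) ℤ) * Cp₂ =
      (X 0) ^ p₂ + (X 1) ^ p₂ - (X 0 + X 1) ^ p₂)
    (d₁₂ d₂₁ : ℤ)
    (hd₁₂ : (p₁ : ℤ) * d₁₂ = (p₂ : ℤ) - (p₂ : ℤ) ^ p₁)
    (hd₂₁ : (p₂ : ℤ) * d₂₁ = (p₁ : ℤ) - (p₁ : ℤ) ^ p₂)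
    (hreg₁ : ∀ a : A, (p₁ : A) * a = 0 → a = 0)
    (hreg₂ : ∀ a : A, (p₂ : A) * a = 0 → a = 0)
    (δ₁ δ₂ : A → A)
    (hadd₁ : ∀ a b : A, δ₁ (a + b) = δ₁ a + δ₁ b + MvPolynomial.aeval ![a, b] Cp₁)
    (hmul₁ : ∀ a b : A, δ₁ (a * b) =
      a ^ p₁ * δ₁ b + b ^ p₁ * δ₁ a + (p₁ : A) * δ₁ a * δ₁ b)
    (hadd₂ : ∀ a b : A, δ₂ (a + b) = δ₂ a + δ₂ b + MvPolynomial.aeval ![a, b] Cp₂)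
    (hmul₂ : ∀ a b : A, δ₂ (a * b) =
      a ^ p₂ * δ₂ b + b ^ p₂ * δ₂ a + (p₂ : A) * δ₂ a * δ₂ b)
    (hcomm : ∀ a : A,
      (p₁ : A) * (p₂ : A) * (δ₁ (δ₂ a) - δ₂ (δ₁ a)) =
        (p₂ : A) * MvPolynomial.aeval ![a ^ p₁, (p₁ : A) * δ₁ a] Cp₂
        - (p₁ : A) * MvPolynomial.aeval ![a ^ p₂, (p₂ : A) * δ₂ a] Cp₁
        - (p₁ : A) * (d₁₂ : A) * (δ₂ a) ^ p₁
        + (p₂ : A) * (d₂₁ : A) * (δ₁ a) ^ p₂) :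
    ∀ a : A,
      ((a ^ p₂ + (p₂ : A) * δ₂ a) ^ p₁ + (p₁ : A) * δ₁ (a ^ p₂ + (p₂ : A) * δ₂ a)) =
      ((a ^ p₁ + (p₁ : A) * δ₁ a) ^ p₂ + (p₂ : A) * δ₂ (a ^ p₁ + (p₁ : A) * δ₁ a)) := by
  -- evaluated versions of the defining identities of Cp₁, Cp₂
  have key₁ : ∀ x y : A, (p₁ : A) * MvPolynomial.aeval ![x, y] Cp₁ =
      x ^ p₁ + y ^ p₁ - (x + y) ^ p₁ := by
    intro x y
    have := congrArg (MvPolynomial.aeval (R := ℤ) ![x, y]) hCp₁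
    simpa using this
  have key₂ : ∀ x y : A, (p₂ : A) * MvPolynomial.aeval ![x, y] Cp₂ =
      x ^ p₂ + y ^ p₂ - (x + y) ^ p₂ := by
    intro x y
    have := congrArg (MvPolynomial.aeval (R := ℤ) ![x, y]) hCp₂
    simpa using this
  -- the Frobenius lifts are additive
  have φadd₁ : ∀ x y : A, (x + y) ^ p₁ + (p₁ : A) * δ₁ (x + y) =
      (x ^ p₁ + (p₁ : A) * δ₁ x) + (y ^ p₁ + (p₁ : A) * δ₁ y) := by
    intro x y; rw [hadd₁]; linear_combination key₁ x y
  have φadd₂ : ∀ x y : A, (x + y) ^ p₂ + (p₂ : A) * δ₂ (x + y) =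
      (x ^ p₂ + (p₂ : A) * δ₂ x) + (y ^ p₂ + (p₂ : A) * δ₂ y) := by
    intro x y; rw [hadd₂]; linear_combination key₂ x y
  -- the Frobenius lifts are multiplicative
  have φmul₁ : ∀ x y : A, (x * y) ^ p₁ + (p₁ : A) * δ₁ (x * y) =
      (x ^ p₁ + (p₁ : A) * δ₁ x) * (y ^ p₁ + (p₁ : A) * δ₁ y) := by
    intro x y; rw [hmul₁]; ring
  have φmul₂ : ∀ x y : A, (x * y) ^ p₂ + (p₂ : A) * δ₂ (x * y) =
      (x ^ p₂ + (p₂ : A) * δ₂ x) * (y ^ p₂ + (p₂ : A) * δ₂ y) := by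
    intro x y; rw [hmul₂]; ring
  -- value at 0
  have φzero₁ : (0 : A) ^ p₁ + (p₁ : A) * δ₁ 0 = 0 := by
    have h := φadd₁ 0 0
    rw [add_zero] at h
    exact (add_eq_left.mp h.symm)
  have φzero₂ : (0 : A) ^ p₂ + (p₂ : A) * δ₂ 0 = 0 := by
    have h := φadd₂ 0 0
    rw [add_zero] at h
    exact (add_eq_left.mp h.symm)
  -- the Frobenius lifts commute with multiplication by natural number constants
  have φnat₁ : ∀ (n : ℕ) (x : A), ((n : A) * x) ^ p₁ + (p₁ : A) * δ₁ ((n : A) * x) =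
      (n : A) * (x ^ p₁ + (p₁ : A) * δ₁ x) := by
    intro n x
    induction n with
    | zero => simpa using φzero₁
    | succ n ih =>
        have : ((n : A) + 1) * x = (n : A) * x + x := by ring
        push_cast
        rw [this, φadd₁, ih]; ring
  have φnat₂ : ∀ (n : ℕ) (x : A), ((n : A) * x) ^ p₂ + (p₂ : A) * δ₂ ((n : A) * x) =
      (n : A) * (x ^ p₂ + (p₂ : A) * δ₂ x) := by
    intro n x
    induction n with
    | zero => simpa using φzero₂
    | succ n ih =>
        have : ((n : A) + 1) * x = (n : A) * x + x := by ring
        push_cast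
        rw [this, φadd₂, ih]; ring
  -- the Frobenius lifts commute with positive powers
  have φpow₁ : ∀ (x : A) (n : ℕ), (x ^ (n + 1)) ^ p₁ + (p₁ : A) * δ₁ (x ^ (n + 1)) =
      (x ^ p₁ + (p₁ : A) * δ₁ x) ^ (n + 1) := by
    intro x n
    induction n with
    | zero => simp
    | succ n ih =>
        rw [pow_succ x (n + 1), φmul₁, ih, ← pow_succ]
  have φpow₂ : ∀ (x : A) (n : ℕ), (x ^ (n + 1)) ^ p₂ + (p₂ : A) * δ₂ (x ^ (n + 1)) =
      (x ^ p₂ + (p₂ : A) * δ₂ x) ^ (n + 1) := by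
    intro x n
    induction n with
    | zero => simp
    | succ n ih =>
        rw [pow_succ x (n + 1), φmul₂, ih, ← pow_succ]
  obtain ⟨m₁, hm₁⟩ : ∃ m, p₁ = m + 1 := ⟨p₁ - 1, (Nat.succ_pred_eq_of_pos hp₁.pos).symm⟩
  obtain ⟨m₂, hm₂⟩ : ∃ m, p₂ = m + 1 := ⟨p₂ - 1, (Nat.succ_pred_eq_of_pos hp₂.pos).symm⟩
  -- cast Fermat quotient identities to A
  have hd₁₂A : (p₁ : A) * (d₁₂ : A) = (p₂ : A) - (p₂ : A) ^ p₁ := by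
    have := congrArg (fun z : ℤ => (z : A)) hd₁₂
    push_cast at this
    exact this
  have hd₂₁A : (p₂ : A) * (d₂₁ : A) = (p₁ : A) - (p₁ : A) ^ p₂ := by
    have := congrArg (fun z : ℤ => (z : A)) hd₂₁
    push_cast at this
    exact this
  intro a
  have h1 := hadd₁ (a ^ p₂) ((p₂ : A) * δ₂ a)
  have h2 := hadd₂ (a ^ p₁) ((p₁ : A) * δ₁ a)
  have hP1 : (a ^ p₂) ^ p₁ + (p₁ : A) * δ₁ (a ^ p₂) =
      (a ^ p₁ + (p₁ : A) * δ₁ a) ^ p₂ := by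
    rw [hm₂]; exact φpow₁ a m₂
  have hP2 : (a ^ p₁) ^ p₂ + (p₂ : A) * δ₂ (a ^ p₁) =
      (a ^ p₂ + (p₂ : A) * δ₂ a) ^ p₁ := by
    rw [hm₁]; exact φpow₂ a m₁
  have hN1 := φnat₁ p₂ (δ₂ a)
  have hN2 := φnat₂ p₁ (δ₁ a)
  have H := hcomm a
  linear_combination (p₁ : A) * h1 - (p₂ : A) * h2 + hP1 - hP2 + hN1 - hN2 + H
    - (δ₂ a) ^ p₁ * hd₁₂A + (δ₁ a) ^ p₂ * hd₂₁A
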